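/- Let p ≥ 2 and n ≥ 3 (p real, n an integer), let φ(t) = t|t|^{p-2}, and let f : ℝ → ℝ be continuously differentiable. Let u ∈ C²([0,1]) satisfy (φ(u'(r)))' + ((n-1)/r) φ(u'(r)) + f(u(r)) = 0 for 0 < r < 1, let ψ ∈ C²([0,1]), and set v(r) = ψ(r) u'(r). Then for 0 < r < 1 one has the pointwise identity [ r^{n-1} ( (p−1) φ(u'(r)) v(r) − u(r) φ'(u'(r)) v'(r) ) ]' + r^{n-1} v(r) [ (p−1) f(u(r)) − u(r) f'(u(r)) ] = p r^{n-1} ψ'(r) u(r) f(u(r)) − r^{n-3} u(r) φ(u'(r)) L_p[ψ](r), where L_p[ψ](r) = (p−1) r² ψ''(r) − (n−1) r ψ'(r) + (n−1) ψ(r). -/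

import Mathlib

open Set Real Filter Topology

lemma hasDerivAt_phi (p : ℝ) (hp : 2 ≤ p) (t : ℝ) :
    HasDerivAt (fun t : ℝ => t * |t| ^ (p - 2)) ((p - 1) * |t| ^ (p - 2)) t := by
  rcases lt_trichotomy t 0 with ht | ht | ht
  · -- t < 0 : near t, function equals fun x => -((-x)^(p-1))
    have h1 : HasDerivAt (fun x : ℝ => -((-x) ^ (p - 1))) ((p - 1) * |t| ^ (p - 2)) t := by
      have h2 : HasDerivAt (fun y : ℝ => y ^ (p - 1)) ((p - 1) * (-t) ^ (p - 1 - 1)) (-t) :=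
        Real.hasDerivAt_rpow_const (Or.inl (neg_ne_zero.mpr (ne_of_lt ht)))
      have h3 := (h2.comp t (hasDerivAt_neg t)).neg
      refine h3.congr_deriv ?_
      rw [abs_of_neg ht, show p - 1 - 1 = p - 2 by ring]
      ring
    refine h1.congr_of_eventuallyEq ?_
    filter_upwards [Iio_mem_nhds ht] with x hx
    have hx' : x < 0 := hx
    rw [abs_of_neg hx', show (-x) ^ (p-1) = (-x) * (-x) ^ (p-2) by
      rw [show p - 1 = 1 + (p-2) by ring, Real.rpow_add (by linarith : (0:ℝ) < -x), Real.rpow_one]]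
    ring
  · subst ht
    rcases eq_or_lt_of_le hp with hp2 | hp2
    · -- p = 2
      have he : (fun t : ℝ => t * |t| ^ (p - 2)) = fun t : ℝ => t := by
        funext x; rw [← hp2]; simp
      rw [he, show (p - 1) * |(0:ℝ)| ^ (p - 2) = 1 by rw [← hp2]; norm_num]
      exact hasDerivAt_id (0:ℝ)
    · -- p > 2, derivative is 0
      have hz : (p - 1) * |(0:ℝ)| ^ (p - 2) = 0 := by
        rw [abs_zero, Real.zero_rpow (by linarith)]; ring
      rw [hz, hasDerivAt_iff_tendsto_slope]
      have hev : (fun x : ℝ => |x| ^ (p - 2)) =ᶠ[𝓝[≠] (0:ℝ)]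
          slope (fun t : ℝ => t * |t| ^ (p - 2)) 0 := by
        filter_upwards [self_mem_nhdsWithin] with x hx
        simp only [Set.mem_compl_iff, Set.mem_singleton_iff] at hx
        rw [slope_def_field]
        field_simp
        ring
      refine Tendsto.congr' hev ?_
      have hcont : ContinuousAt (fun x : ℝ => |x| ^ (p - 2)) 0 := by
        have := Real.continuousAt_rpow_const (|(0:ℝ)|) (p-2) (Or.inr (by linarith))
        exact this.comp continuous_abs.continuousAt
      have ht := hcont.tendsto
      simp only [abs_zero, Real.zero_rpow (show p - 2 ≠ 0 by linarith)] at ht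
      exact ht.mono_left nhdsWithin_le_nhds
  · -- t > 0
    have h1 : HasDerivAt (fun x : ℝ => x ^ (p - 1)) ((p - 1) * |t| ^ (p - 2)) t := by
      have h2 : HasDerivAt (fun y : ℝ => y ^ (p - 1)) ((p - 1) * t ^ (p - 1 - 1)) t :=
        Real.hasDerivAt_rpow_const (Or.inl (ne_of_gt ht))
      convert h2 using 1
      rw [abs_of_pos ht, show p - 1 - 1 = p - 2 by ring]
    refine h1.congr_of_eventuallyEq ?_
    filter_upwards [Ioi_mem_nhds ht] with x hx
    have hx' : (0:ℝ) < x := hx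
    rw [abs_of_pos hx', show (p:ℝ) - 1 = 1 + (p-2) by ring, Real.rpow_add hx', Real.rpow_one]


/-- The pointwise divergence identity (3.5) used in the proof of the
generalized p-Laplace Pohozhaev identity.  `φ(t) = t|t|^{p-2}`,
`φ'(t) = (p-1)|t|^{p-2}` (denoted `φd`), `u` is C² on `[0,1]` solving
`(φ(u'))' + ((n-1)/r) φ(u') + f(u) = 0` on `(0,1)`, `ψ` is C² on `[0,1]`,
`v = ψ u'` and `v' = ψ' u' + ψ u''`.  Then on `(0,1)`:
`[r^{n-1}((p-1)φ(u')v - u φ'(u')v')]' + r^{n-1} v ((p-1)f(u) - u f'(u))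
  = p r^{n-1} ψ' u f(u) - r^{n-3} u φ(u') L_p[ψ]`,
with `L_p[ψ] = (p-1) r² ψ'' - (n-1) r ψ' + (n-1) ψ`. -/
theorem pLaplace_divergence_identity
    (p : ℝ) (hp : 2 ≤ p) (n : ℕ) (hn : 3 ≤ n)
    (φ φd : ℝ → ℝ)
    (hφ : ∀ t : ℝ, φ t = t * |t| ^ (p - 2))
    (hφd : ∀ t : ℝ, φd t = (p - 1) * |t| ^ (p - 2))
    (f : ℝ → ℝ) (hf : ContDiff ℝ 1 f)
    (u u' u'' : ℝ → ℝ)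
    (hu : ∀ r ∈ Icc (0:ℝ) 1, HasDerivAt u (u' r) r)
    (hu' : ∀ r ∈ Icc (0:ℝ) 1, HasDerivAt u' (u'' r) r)
    (hu''c : ContinuousOn u'' (Icc (0:ℝ) 1))
    (ψ ψ' ψ'' : ℝ → ℝ)
    (hψ : ∀ r ∈ Icc (0:ℝ) 1, HasDerivAt ψ (ψ' r) r)
    (hψ' : ∀ r ∈ Icc (0:ℝ) 1, HasDerivAt ψ' (ψ'' r) r)
    (hψ''c : ContinuousOn ψ'' (Icc (0:ℝ) 1))
    (hode : ∀ r ∈ Ioo (0:ℝ) 1,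
      deriv (fun s => φ (u' s)) r + ((n : ℝ) - 1) / r * φ (u' r) + f (u r) = 0) :
    ∀ r ∈ Ioo (0:ℝ) 1,
      deriv (fun s =>
          s ^ (n - 1) * ((p - 1) * φ (u' s) * (ψ s * u' s)
            - u s * (φd (u' s) * (ψ' s * u' s + ψ s * u'' s)))) r
        + r ^ (n - 1) * (ψ r * u' r)
            * ((p - 1) * f (u r) - u r * deriv f (u r))
      = p * r ^ (n - 1) * ψ' r * u r * f (u r)
        - r ^ (n - 3) * u r * φ (u' r)
            * ((p - 1) * r ^ 2 * ψ'' r - ((n : ℝ) - 1) * r * ψ' r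
                + ((n : ℝ) - 1) * ψ r) := by
  obtain ⟨m, rfl⟩ : ∃ m, n = m + 3 := ⟨n - 3, by omega⟩
  intro r hr
  obtain ⟨hr0, hr1⟩ := hr
  have hrne : r ≠ 0 := ne_of_gt hr0
  have hIcc : ∀ s ∈ Ioo (0:ℝ) 1, s ∈ Icc (0:ℝ) 1 := fun s hs => ⟨hs.1.le, hs.2.le⟩
  -- derivative of s ↦ φ (u' s)
  have hAd : ∀ s ∈ Ioo (0:ℝ) 1,
      HasDerivAt (fun x => φ (u' x)) (φd (u' s) * u'' s) s := by
    intro s hs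
    have h3 := (hasDerivAt_phi p hp (u' s)).comp s (hu' s (hIcc s hs))
    have heq : (fun x => φ (u' x)) = ((fun t : ℝ => t * |t| ^ (p - 2)) ∘ u') :=
      funext fun x => hφ (u' x)
    rw [hφd, heq]
    exact h3
  -- ODE in multiplied-through form
  have hode' : ∀ s ∈ Ioo (0:ℝ) 1,
      s * (φd (u' s) * u'' s) = -(((m:ℝ) + 2) * φ (u' s)) - s * f (u s) := by
    intro s hs
    have h := hode s hs
    rw [(hAd s hs).deriv] at h
    have hs0 : s ≠ 0 := ne_of_gt hs.1
    push_cast at h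
    field_simp at h
    linear_combination h
  -- the function under deriv agrees with a nicer one on Ioo 0 1
  have hFH : (fun s =>
          s ^ (m + 3 - 1) * ((p - 1) * φ (u' s) * (ψ s * u' s)
            - u s * (φd (u' s) * (ψ' s * u' s + ψ s * u'' s))))
      =ᶠ[𝓝 r] (fun s =>
          s ^ (m + 2) * ((p - 1) * φ (u' s) * (ψ s * u' s - u s * ψ' s))
          + ((m:ℝ) + 2) * (s ^ (m + 1) * (u s * ψ s * φ (u' s)))
          + s ^ (m + 2) * (u s * ψ s * f (u s))) := by
    filter_upwards [isOpen_Ioo.mem_nhds ⟨hr0, hr1⟩] with s hs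
    have h2 := hode' s hs
    have h1 : (p - 1) * φ (u' s) = u' s * φd (u' s) := by
      rw [hφ, hφd]; ring
    show s ^ (m + 2) * _ = _
    linear_combination (s ^ (m + 2) * (u s * ψ' s)) * h1
      - (s ^ (m + 1) * (u s * ψ s)) * h2
  -- derivatives of the pieces at r
  have hrIcc : r ∈ Icc (0:ℝ) 1 := ⟨hr0.le, hr1.le⟩
  have hu_r := hu r hrIcc
  have hu'_r := hu' r hrIcc
  have hψ_r := hψ r hrIcc
  have hψ'_r := hψ' r hrIcc
  have hA_r := hAd r ⟨hr0, hr1⟩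
  have hB_r : HasDerivAt (fun x => f (u x)) (deriv f (u r) * u' r) r :=
    ((hf.differentiable one_ne_zero (u r)).hasDerivAt).comp r hu_r
  have hH1 : HasDerivAt
      (fun s => s ^ (m + 2) * ((p - 1) * φ (u' s) * (ψ s * u' s - u s * ψ' s)))
      ((↑(m + 2) * r ^ (m + 2 - 1)) * ((p - 1) * φ (u' r) * (ψ r * u' r - u r * ψ' r))
        + r ^ (m + 2) * (((p - 1) * (φd (u' r) * u'' r)) * (ψ r * u' r - u r * ψ' r)
            + (p - 1) * φ (u' r) * ((ψ' r * u' r + ψ r * u'' r)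
                - (u' r * ψ' r + u r * ψ'' r)))) r :=
    (hasDerivAt_pow (m + 2) r).mul
      ((hA_r.const_mul (p - 1)).mul ((hψ_r.mul hu'_r).sub (hu_r.mul hψ'_r)))
  have hH2 : HasDerivAt
      (fun s => ((m:ℝ) + 2) * (s ^ (m + 1) * (u s * ψ s * φ (u' s))))
      (((m:ℝ) + 2) * ((↑(m + 1) * r ^ (m + 1 - 1)) * (u r * ψ r * φ (u' r))
        + r ^ (m + 1) * ((u' r * ψ r + u r * ψ' r) * φ (u' r)
            + u r * ψ r * (φd (u' r) * u'' r)))) r :=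
    (((hasDerivAt_pow (m + 1) r).mul ((hu_r.mul hψ_r).mul hA_r)).const_mul ((m:ℝ) + 2))
  have hH3 : HasDerivAt
      (fun s => s ^ (m + 2) * (u s * ψ s * f (u s)))
      ((↑(m + 2) * r ^ (m + 2 - 1)) * (u r * ψ r * f (u r))
        + r ^ (m + 2) * ((u' r * ψ r + u r * ψ' r) * f (u r)
            + u r * ψ r * (deriv f (u r) * u' r))) r :=
    (hasDerivAt_pow (m + 2) r).mul ((hu_r.mul hψ_r).mul hB_r)
  have hH : HasDerivAt (fun s => s ^ (m + 2) * ((p - 1) * φ (u' s) * (ψ s * u' s - u s * ψ' s))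
      + ((m:ℝ) + 2) * (s ^ (m + 1) * (u s * ψ s * φ (u' s)))
      + s ^ (m + 2) * (u s * ψ s * f (u s))) _ r := (hH1.add hH2).add hH3
  rw [hFH.deriv_eq, hH.deriv]
  -- final algebra
  have h1 : (p - 1) * φ (u' r) = u' r * φd (u' r) := by
    rw [hφ, hφd]; ring
  have h2 := hode' r ⟨hr0, hr1⟩
  have e1 : m + 2 - 1 = m + 1 := rfl
  have e2 : m + 1 - 1 = m := rfl
  have e3 : m + 3 - 1 = m + 2 := rfl
  have e4 : m + 3 - 3 = m := by omega
  rw [e1, e2, e3, e4]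
  push_cast
  linear_combination (r ^ (m + 2) * ψ r * u'' r) * h1
    + (r ^ (m + 1) * (p - 1) * (ψ r * u' r - u r * ψ' r)
        + ((m:ℝ) + 2) * r ^ m * (u r * ψ r) + r ^ (m + 1) * (ψ r * u' r)) * h2
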